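/- Let 𝓑 be a partition of Ω and let κ be a closure operator in K_d such that E_κ(G) ⊆ E_{κ₁}(G) for every G ⊆ L, where κ₁(G) := posi(G). Let D_𝓑 ⊆ L_𝓑 be κ₁-coherent relative to L_𝓑, for each B ∈ 𝓑 let D|B ⊆ L|B be κ₁-coherent relative to L|B, and set D|𝓑 := {f ∈ L : f ≠ 0 and for every B ∈ 𝓑, 1_B·f ∈ D|B ∪ {0}}. Then the marginal extension D' := E_κ(D_𝓑 ∪ D|𝓑) is κ-coherent. -/
import Mathlib


open Set

/-- The set of gambles: bounded real-valued functions on `Ω`. -/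
def Gambles (Ω : Type*) : Set (Ω → ℝ) := {f | ∃ M : ℝ, ∀ ω, |f ω| ≤ M}

/-- `L⁺`: the positive gambles. -/
def Lpos (Ω : Type*) : Set (Ω → ℝ) := {f ∈ Gambles Ω | 0 ≤ f ∧ f ≠ 0}

/-- `L⁻₀`: the nonpositive gambles. -/
def Lneg0 (Ω : Type*) : Set (Ω → ℝ) := {f ∈ Gambles Ω | f ≤ 0}

/-- A closure operator on the subsets of the set of gambles. -/
structure IsClosureOp (Ω : Type*) (κ : Set (Ω → ℝ) → Set (Ω → ℝ)) : Prop where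
  maps_to : ∀ D ⊆ Gambles Ω, κ D ⊆ Gambles Ω
  extensive : ∀ D ⊆ Gambles Ω, D ⊆ κ D
  mono : ∀ ⦃D D' : Set (Ω → ℝ)⦄, D ⊆ Gambles Ω → D' ⊆ Gambles Ω → D ⊆ D' → κ D ⊆ κ D'
  idem : ∀ D ⊆ Gambles Ω, κ (κ D) = κ D

/-- Natural extension `E_κ(D) = κ(D ∪ L⁺)`. -/
def natExt {Ω : Type*} (κ : Set (Ω → ℝ) → Set (Ω → ℝ)) (D : Set (Ω → ℝ)) : Set (Ω → ℝ) :=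
  κ (D ∪ Lpos Ω)

/-- `D` avoids partial loss: `L⁻₀ ∩ E_κ(D) = ∅`. -/
def AvoidsPartialLoss {Ω : Type*} (κ : Set (Ω → ℝ) → Set (Ω → ℝ)) (D : Set (Ω → ℝ)) : Prop :=
  Lneg0 Ω ∩ natExt κ D = ∅

/-- `D` is κ-coherent relative to `Q`. -/
def CoherentRel {Ω : Type*} (κ : Set (Ω → ℝ) → Set (Ω → ℝ)) (Q D : Set (Ω → ℝ)) : Prop :=
  AvoidsPartialLoss κ D ∧ Q ∩ natExt κ D ⊆ D

/-- `D` is κ-coherent: `κ(D ∪ L⁺) = D` and `D ∩ L⁻₀ = ∅`. -/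
def Coherent {Ω : Type*} (κ : Set (Ω → ℝ) → Set (Ω → ℝ)) (D : Set (Ω → ℝ)) : Prop :=
  D ⊆ Gambles Ω ∧ κ (D ∪ Lpos Ω) = D ∧ D ∩ Lneg0 Ω = ∅

/-- A set of gambles is closed under dominance. -/
def ClosedUnderDominance {Ω : Type*} (G : Set (Ω → ℝ)) : Prop :=
  G = {g | g ∈ Gambles Ω ∧ ∃ f ∈ G, f ≤ g}

/-- `K_d`: closure operators all of whose coherent sets are closed under dominance. -/
def InKd {Ω : Type*} (κ : Set (Ω → ℝ) → Set (Ω → ℝ)) : Prop :=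
  IsClosureOp Ω κ ∧ ∀ D : Set (Ω → ℝ), Coherent κ D → ClosedUnderDominance D

/-- Lower prevision induced by `D`: `P_D(f) = sup {μ : f - μ ∈ D}`. -/
noncomputable def lowPrev {Ω : Type*} (D : Set (Ω → ℝ)) (f : Ω → ℝ) : ℝ :=
  sSup {μ : ℝ | (f - fun _ => μ) ∈ D}

/-- Upper prevision induced by `D`: `Q_D(f) = inf {μ : μ - f ∈ D}`. -/
noncomputable def upPrev {Ω : Type*} (D : Set (Ω → ℝ)) (f : Ω → ℝ) : ℝ :=
  sInf {μ : ℝ | ((fun _ => μ) - f) ∈ D}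

/-- `posi(G)`: positive linear combinations of elements of `G`; this is the linear
closure operator `κ₁`. -/
def posi {Ω : Type*} (G : Set (Ω → ℝ)) : Set (Ω → ℝ) :=
  {g | ∃ (n : ℕ) (f : Fin (n + 1) → Ω → ℝ) (l : Fin (n + 1) → ℝ),
    (∀ i, f i ∈ G) ∧ (∀ i, 0 < l i) ∧ g = ∑ i, l i • f i}

/-- `L_𝓑`: the gambles that are constant on every element of the partition `𝓑`. -/
def Lmeas {Ω : Type*} (𝓑 : Set (Set Ω)) : Set (Ω → ℝ) :=
  {f ∈ Gambles Ω | ∀ B ∈ 𝓑, ∀ ω ∈ B, ∀ ω' ∈ B, f ω = f ω'}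

/-- `L|B`: the gambles vanishing outside `B`, i.e. with `f = 1_B·f`. -/
def Lcond {Ω : Type*} (B : Set Ω) : Set (Ω → ℝ) :=
  {f ∈ Gambles Ω | f = B.indicator f}

/-- `D|𝓑`: the nonzero gambles `f` with `1_B·f ∈ D|B ∪ {0}` for every `B ∈ 𝓑`. -/
def condAgg {Ω : Type*} (𝓑 : Set (Set Ω)) (Dc : Set Ω → Set (Ω → ℝ)) : Set (Ω → ℝ) :=
  {f | f ∈ Gambles Ω ∧ f ≠ 0 ∧ ∀ B ∈ 𝓑, B.indicator f ∈ Dc B ∪ {0}}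


section Aux

variable {Ω : Type*}

lemma zero_mem_gambles : (0 : Ω → ℝ) ∈ Gambles Ω := ⟨0, fun ω => by simp⟩

lemma add_mem_gambles {f g : Ω → ℝ} (hf : f ∈ Gambles Ω) (hg : g ∈ Gambles Ω) :
    f + g ∈ Gambles Ω := by
  obtain ⟨M, hM⟩ := hf; obtain ⟨N, hN⟩ := hg
  exact ⟨M + N, fun ω => (abs_add_le _ _).trans (add_le_add (hM ω) (hN ω))⟩

lemma smul_mem_gambles {f : Ω → ℝ} (l : ℝ) (hf : f ∈ Gambles Ω) : l • f ∈ Gambles Ω := by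
  obtain ⟨M, hM⟩ := hf
  refine ⟨|l| * M, fun ω => ?_⟩
  rw [Pi.smul_apply, smul_eq_mul, abs_mul]
  exact mul_le_mul_of_nonneg_left (hM ω) (abs_nonneg l)

lemma indicator_mem_gambles {f : Ω → ℝ} (B : Set Ω) (hf : f ∈ Gambles Ω) :
    B.indicator f ∈ Gambles Ω := by
  obtain ⟨M, hM⟩ := hf
  refine ⟨max M 0, fun ω => ?_⟩
  by_cases hω : ω ∈ B
  · rw [Set.indicator_of_mem hω]; exact (hM ω).trans (le_max_left _ _)
  · rw [Set.indicator_of_notMem hω]; simp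

/-- Inductive characterization of `posi`. -/
inductive PosiGen (G : Set (Ω → ℝ)) : (Ω → ℝ) → Prop
  | base (f : Ω → ℝ) (hf : f ∈ G) (l : ℝ) (hl : 0 < l) : PosiGen G (l • f)
  | add (a b : Ω → ℝ) (ha : PosiGen G a) (hb : PosiGen G b) : PosiGen G (a + b)

lemma PosiGen.self {G : Set (Ω → ℝ)} {f : Ω → ℝ} (hf : f ∈ G) : PosiGen G f := by
  have := PosiGen.base f hf 1 one_pos
  rwa [one_smul] at this

lemma PosiGen.mono {G G' : Set (Ω → ℝ)} (h : G ⊆ G') {f : Ω → ℝ} (hf : PosiGen G f) :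
    PosiGen G' f := by
  induction hf with
  | base f hf l hl => exact .base f (h hf) l hl
  | add a b _ _ ia ib => exact .add a b ia ib

lemma sum_posiGen {G : Set (Ω → ℝ)} : ∀ (n : ℕ) (f : Fin (n+1) → Ω → ℝ) (l : Fin (n+1) → ℝ),
    (∀ i, f i ∈ G) → (∀ i, 0 < l i) → PosiGen G (∑ i, l i • f i)
  | 0, f, l, hf, hl => by
      rw [Fin.sum_univ_one]; exact .base _ (hf 0) _ (hl 0)
  | (n+1), f, l, hf, hl => by
      rw [Fin.sum_univ_castSucc]
      exact .add _ _
        (sum_posiGen n (fun i => f i.castSucc) (fun i => l i.castSucc)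
          (fun i => hf _) (fun i => hl _))
        (.base _ (hf _) _ (hl _))

lemma posiGen_of_mem_posi {G : Set (Ω → ℝ)} {g : Ω → ℝ} (hg : g ∈ posi G) : PosiGen G g := by
  obtain ⟨n, f, l, hf, hl, rfl⟩ := hg
  exact sum_posiGen n f l hf hl

lemma mem_posi_of_posiGen {G : Set (Ω → ℝ)} {g : Ω → ℝ} (hg : PosiGen G g) : g ∈ posi G := by
  induction hg with
  | base f hf l hl =>
      exact ⟨0, fun _ => f, fun _ => l, fun _ => hf, fun _ => hl, by rw [Fin.sum_univ_one]⟩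
  | add a b _ _ ia ib =>
      obtain ⟨n, f₁, l₁, hf₁, hl₁, rfl⟩ := ia
      obtain ⟨m, f₂, l₂, hf₂, hl₂, rfl⟩ := ib
      refine ⟨n + 1 + m, Fin.addCases (m := n + 1) (n := m + 1) f₁ f₂,
        Fin.addCases (m := n + 1) (n := m + 1) l₁ l₂, ?_, ?_, ?_⟩
      · intro i
        refine Fin.addCases (m := n + 1) (n := m + 1) (fun j => ?_) (fun j => ?_) i
        · simp only [Fin.addCases_left]; exact hf₁ j
        · simp only [Fin.addCases_right]; exact hf₂ j
      · intro i
        refine Fin.addCases (m := n + 1) (n := m + 1) (fun j => ?_) (fun j => ?_) i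
        · simp only [Fin.addCases_left]; exact hl₁ j
        · simp only [Fin.addCases_right]; exact hl₂ j
      · refine Eq.trans ?_ (Fin.sum_univ_add (f := fun i =>
          Fin.addCases (m := n + 1) (n := m + 1) (motive := fun _ => ℝ) l₁ l₂ i •
            Fin.addCases (m := n + 1) (n := m + 1) (motive := fun _ => Ω → ℝ) f₁ f₂ i)).symm
        congr 1
        · exact Finset.sum_congr rfl fun j _ => by simp only [Fin.addCases_left]
        · exact Finset.sum_congr rfl fun j _ => by simp only [Fin.addCases_right]

lemma posiGen_mem_gambles {G : Set (Ω → ℝ)} (hG : G ⊆ Gambles Ω) {g : Ω → ℝ}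
    (hg : PosiGen G g) : g ∈ Gambles Ω := by
  induction hg with
  | base f hf l hl => exact smul_mem_gambles l (hG hf)
  | add a b _ _ ia ib => exact add_mem_gambles ia ib

/-- no nonpositive gamble lies in `posi (D ∪ Lpos)` if `D` avoids partial loss. -/
lemma apl_not_le {D : Set (Ω → ℝ)} (hapl : AvoidsPartialLoss posi D) {f : Ω → ℝ}
    (hf : PosiGen (D ∪ Lpos Ω) f) (hfG : f ∈ Gambles Ω) : ¬ f ≤ 0 := by
  intro hle
  have hapl' : Lneg0 Ω ∩ natExt posi D = ∅ := hapl
  have hmem : f ∈ Lneg0 Ω ∩ natExt posi D :=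
    ⟨⟨hfG, hle⟩, mem_posi_of_posiGen hf⟩
  rw [hapl'] at hmem
  exact hmem

lemma merge_opt {G : Set (Ω → ℝ)} {a b : Ω → ℝ} (ha : PosiGen G a ∨ a = 0)
    (hb : PosiGen G b ∨ b = 0) : PosiGen G (a + b) ∨ a + b = 0 := by
  rcases ha with ha | rfl
  · rcases hb with hb | rfl
    · exact Or.inl (.add _ _ ha hb)
    · rw [add_zero]; exact Or.inl ha
  · rw [zero_add]; exact hb

lemma merge_keep {G : Set (Ω → ℝ)} {a b : Ω → ℝ} (ha : PosiGen G a)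
    (hb : PosiGen G b ∨ b = 0) : PosiGen G (a + b) := by
  rcases hb with hb | rfl
  · exact .add _ _ ha hb
  · rwa [add_zero]

/-- Split a positive combination from a triple union into three pieces. -/
lemma posiGen_split3 {S T U : Set (Ω → ℝ)} {g : Ω → ℝ} (hg : PosiGen (S ∪ T ∪ U) g) :
    ∃ h c p : Ω → ℝ, g = h + c + p ∧ (PosiGen S h ∨ h = 0) ∧ (PosiGen T c ∨ c = 0) ∧
      (PosiGen U p ∨ p = 0) ∧ (PosiGen S h ∨ PosiGen T c ∨ PosiGen U p) := by
  induction hg with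
  | base f hf l hl =>
      rcases hf with (hf | hf) | hf
      · exact ⟨l • f, 0, 0, by simp, Or.inl (.base f hf l hl), Or.inr rfl, Or.inr rfl,
          Or.inl (.base f hf l hl)⟩
      · exact ⟨0, l • f, 0, by simp, Or.inr rfl, Or.inl (.base f hf l hl), Or.inr rfl,
          Or.inr (Or.inl (.base f hf l hl))⟩
      · exact ⟨0, 0, l • f, by simp, Or.inr rfl, Or.inr rfl, Or.inl (.base f hf l hl),
          Or.inr (Or.inr (.base f hf l hl))⟩
  | add a b _ _ ia ib =>
      obtain ⟨h₁, c₁, p₁, rfl, hh₁, hc₁, hp₁, hd₁⟩ := ia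
      obtain ⟨h₂, c₂, p₂, rfl, hh₂, hc₂, hp₂, hd₂⟩ := ib
      refine ⟨h₁ + h₂, c₁ + c₂, p₁ + p₂, by abel, merge_opt hh₁ hh₂, merge_opt hc₁ hc₂,
        merge_opt hp₁ hp₂, ?_⟩
      rcases hd₁ with hd | hd | hd
      · exact Or.inl (merge_keep hd hh₂)
      · exact Or.inr (Or.inl (merge_keep hd hc₂))
      · exact Or.inr (Or.inr (merge_keep hd hp₂))

end Aux

section MainAux

variable {Ω : Type*}

/-- `posi Lpos ⊆ Lpos`. -/
lemma posiGen_lpos {p : Ω → ℝ} (hp : PosiGen (Lpos Ω) p) : p ∈ Lpos Ω := by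
  induction hp with
  | base f hf l hl =>
      refine ⟨smul_mem_gambles l hf.1, ?_, ?_⟩
      · intro ω
        exact smul_nonneg hl.le (hf.2.1 ω)
      · exact smul_ne_zero hl.ne' hf.2.2
  | add a b ha hb ia ib =>
      refine ⟨add_mem_gambles ia.1 ib.1, fun ω => add_nonneg (ia.2.1 ω) (ib.2.1 ω), ?_⟩
      obtain ⟨ω, hω⟩ := Function.ne_iff.mp ia.2.2
      have hpos : 0 < a ω := lt_of_le_of_ne (ia.2.1 ω) (Ne.symm hω)
      intro h0
      have h0' := congrFun h0 ω
      have hb0 : 0 ≤ b ω := ib.2.1 ω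
      simp only [Pi.add_apply, Pi.zero_apply] at h0'
      linarith

lemma posiGen_lmeas {𝓑 : Set (Set Ω)} {D : Set (Ω → ℝ)} (hD : D ⊆ Lmeas 𝓑) {h : Ω → ℝ}
    (hh : PosiGen D h) : h ∈ Lmeas 𝓑 := by
  induction hh with
  | base f hf l hl =>
      obtain ⟨hfG, hfc⟩ := hD hf
      refine ⟨smul_mem_gambles l hfG, fun B hB ω hω ω' hω' => ?_⟩
      simp only [Pi.smul_apply, smul_eq_mul, hfc B hB ω hω ω' hω']
  | add a b _ _ ia ib =>
      refine ⟨add_mem_gambles ia.1 ib.1, fun B hB ω hω ω' hω' => ?_⟩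
      simp only [Pi.add_apply, ia.2 B hB ω hω ω' hω', ib.2 B hB ω hω ω' hω']

lemma posiGen_lcond {B : Set Ω} {D : Set (Ω → ℝ)} (hD : D ⊆ Lcond B) {h : Ω → ℝ}
    (hh : PosiGen D h) : h ∈ Lcond B := by
  induction hh with
  | base f hf l hl =>
      obtain ⟨hfG, hfc⟩ := hD hf
      refine ⟨smul_mem_gambles l hfG, funext fun ω => ?_⟩
      by_cases hω : ω ∈ B
      · rw [Set.indicator_of_mem hω]
      · rw [Set.indicator_of_notMem hω, Pi.smul_apply]
        have hf0 : f ω = 0 := (congrFun hfc ω).trans (Set.indicator_of_notMem hω f)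
        simp [hf0]
  | add a b _ _ ia ib =>
      refine ⟨add_mem_gambles ia.1 ib.1, funext fun ω => ?_⟩
      by_cases hω : ω ∈ B
      · rw [Set.indicator_of_mem hω]
      · rw [Set.indicator_of_notMem hω, Pi.add_apply]
        have ha0 : a ω = 0 := (congrFun ia.2 ω).trans (Set.indicator_of_notMem hω a)
        have hb0 : b ω = 0 := (congrFun ib.2 ω).trans (Set.indicator_of_notMem hω b)
        rw [ha0, hb0, add_zero]

lemma posiGen_closed_meas {𝓑 : Set (Set Ω)} {DB : Set (Ω → ℝ)} (hDBsub : DB ⊆ Lmeas 𝓑)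
    (hcoh : CoherentRel posi (Lmeas 𝓑) DB) {h : Ω → ℝ} (hh : PosiGen DB h) : h ∈ DB :=
  hcoh.2 ⟨posiGen_lmeas hDBsub hh, mem_posi_of_posiGen (hh.mono Set.subset_union_left)⟩

lemma posiGen_closed_cond {B : Set Ω} {D : Set (Ω → ℝ)} (hsub : D ⊆ Lcond B)
    (hcoh : CoherentRel posi (Lcond B) D) {h : Ω → ℝ} (hh : PosiGen D h) : h ∈ D :=
  hcoh.2 ⟨posiGen_lcond hsub hh, mem_posi_of_posiGen (hh.mono Set.subset_union_left)⟩

lemma zero_notMem_of_apl {D : Set (Ω → ℝ)} (hapl : AvoidsPartialLoss posi D) :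
    (0 : Ω → ℝ) ∉ D := fun h0 =>
  apl_not_le hapl (PosiGen.self (Or.inl h0)) zero_mem_gambles le_rfl

lemma indicator_add_fun (B : Set Ω) (a b : Ω → ℝ) :
    B.indicator (a + b) = B.indicator a + B.indicator b := by
  funext ω; by_cases hω : ω ∈ B <;>
    simp [Set.indicator_of_mem, Set.indicator_of_notMem, hω]

lemma posiGen_condAgg {𝓑 : Set (Set Ω)} (hpart : Setoid.IsPartition 𝓑)
    {Dc : Set Ω → Set (Ω → ℝ)}
    (hDc : ∀ B ∈ 𝓑, Dc B ⊆ Lcond B ∧ CoherentRel posi (Lcond B) (Dc B)) {c : Ω → ℝ}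
    (hc : PosiGen (condAgg 𝓑 Dc) c) : c ∈ condAgg 𝓑 Dc := by
  induction hc with
  | base f hf l hl =>
      refine ⟨smul_mem_gambles l hf.1, smul_ne_zero hl.ne' hf.2.1, fun B hB => ?_⟩
      have hind : B.indicator (l • f) = l • B.indicator f := by
        funext ω; by_cases hω : ω ∈ B <;>
          simp [Set.indicator_of_mem, Set.indicator_of_notMem, hω]
      rw [hind]
      rcases hf.2.2 B hB with hmem | h0
      · exact Or.inl (posiGen_closed_cond (hDc B hB).1 (hDc B hB).2 (.base _ hmem l hl))
      · right
        rw [Set.mem_singleton_iff] at h0 ⊢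
        rw [h0, smul_zero]
  | add a b _ _ ia ib =>
      have hmemB : ∀ B ∈ 𝓑, B.indicator (a + b) ∈ Dc B ∪ {0} := by
        intro B hB
        rw [indicator_add_fun]
        rcases ia.2.2 B hB with h1 | h1 <;> rcases ib.2.2 B hB with h2 | h2
        · exact Or.inl (posiGen_closed_cond (hDc B hB).1 (hDc B hB).2
            (.add _ _ (.self h1) (.self h2)))
        · rw [Set.mem_singleton_iff] at h2; rw [h2, add_zero]; exact Or.inl h1
        · rw [Set.mem_singleton_iff] at h1; rw [h1, zero_add]; exact Or.inl h2
        · rw [Set.mem_singleton_iff] at h1 h2; rw [h1, h2, add_zero]; exact Or.inr rfl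
      have hne : a + b ≠ 0 := by
        obtain ⟨ω, hω⟩ := Function.ne_iff.mp ia.2.1
        obtain ⟨B₀, ⟨hB₀, hωB₀⟩, -⟩ := hpart.2 ω
        have hz := zero_notMem_of_apl (hDc B₀ hB₀).2.1
        have ha' : B₀.indicator a ∈ Dc B₀ := by
          rcases ia.2.2 B₀ hB₀ with h | h
          · exact h
          · rw [Set.mem_singleton_iff] at h
            have : a ω = 0 := by
              rw [← Set.indicator_of_mem hωB₀ a, h]; rfl
            exact absurd this hω
        have hsum : B₀.indicator (a + b) ∈ Dc B₀ := by
          rw [indicator_add_fun]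
          rcases ib.2.2 B₀ hB₀ with h2 | h2
          · exact posiGen_closed_cond (hDc B₀ hB₀).1 (hDc B₀ hB₀).2
              (.add _ _ (.self ha') (.self h2))
          · rw [Set.mem_singleton_iff] at h2; rw [h2, add_zero]; exact ha'
        intro h0
        rw [h0, Set.indicator_zero'] at hsum
        exact hz hsum
      exact ⟨add_mem_gambles ia.1 ib.1, hne, hmemB⟩

end MainAux

/-- under the stated conditions, the marginal extension
`D' = E_κ(D_𝓑 ∪ D|𝓑)` is κ-coherent. -/
theorem stmt10 {Ω : Type*} [Nonempty Ω] (𝓑 : Set (Set Ω)) (hpart : Setoid.IsPartition 𝓑)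
    (κ : Set (Ω → ℝ) → Set (Ω → ℝ)) (hκ : InKd κ)
    (hdom : ∀ G ⊆ Gambles Ω, natExt κ G ⊆ natExt posi G)
    (DB : Set (Ω → ℝ)) (hDBsub : DB ⊆ Lmeas 𝓑)
    (hDBcoh : CoherentRel posi (Lmeas 𝓑) DB)
    (Dc : Set Ω → Set (Ω → ℝ))
    (hDc : ∀ B ∈ 𝓑, Dc B ⊆ Lcond B ∧ CoherentRel posi (Lcond B) (Dc B)) :
    Coherent κ (natExt κ (DB ∪ condAgg 𝓑 Dc)) := by
  classical
  obtain ⟨hclos, -⟩ := hκ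
  have hDBG : DB ⊆ Gambles Ω := fun f hf => (hDBsub hf).1
  have hCAG : condAgg 𝓑 Dc ⊆ Gambles Ω := fun f hf => hf.1
  have hbaseG : DB ∪ condAgg 𝓑 Dc ⊆ Gambles Ω := union_subset hDBG hCAG
  have hLposG : Lpos Ω ⊆ Gambles Ω := fun f hf => hf.1
  have hbase'G : (DB ∪ condAgg 𝓑 Dc) ∪ Lpos Ω ⊆ Gambles Ω := union_subset hbaseG hLposG
  refine ⟨hclos.maps_to _ hbase'G, ?_, ?_⟩
  · have hLsub : Lpos Ω ⊆ natExt κ (DB ∪ condAgg 𝓑 Dc) :=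
      fun f hf => hclos.extensive _ hbase'G (Or.inr hf)
    rw [Set.union_eq_left.mpr hLsub]
    exact hclos.idem _ hbase'G
  · rw [eq_empty_iff_forall_notMem]
    rintro g ⟨hgD', hgG, hgle⟩
    have hgposi : g ∈ posi ((DB ∪ condAgg 𝓑 Dc) ∪ Lpos Ω) := hdom _ hbaseG hgD'
    obtain ⟨h, c, p, hgeq, hh, hc, hp, hone⟩ := posiGen_split3 (posiGen_of_mem_posi hgposi)
    have hpnn : ∀ ω, 0 ≤ p ω := by
      rcases hp with hp' | rfl
      · exact fun ω => (posiGen_lpos hp').2.1 ω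
      · exact fun ω => le_rfl
    have hgval : ∀ ω, g ω = h ω + c ω + p ω := fun ω => congrFun hgeq ω
    have hgle' : ∀ ω, g ω ≤ 0 := fun ω => hgle ω
    rcases hh with hhg | rfl
    · -- the marginal part is present
      have hhDB : h ∈ DB := posiGen_closed_meas hDBsub hDBcoh hhg
      have hhG : h ∈ Gambles Ω := hDBG hhDB
      have hhne : ¬ h ≤ 0 := apl_not_le hDBcoh.1 (PosiGen.self (Or.inl hhDB)) hhG
      obtain ⟨ω₀, hω₀⟩ : ∃ ω, 0 < h ω := by
        by_contra hcon
        push_neg at hcon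
        exact hhne fun ω => hcon ω
      obtain ⟨B₀, ⟨hB₀, hω₀B₀⟩, -⟩ := hpart.2 ω₀
      have hconst : ∀ ω ∈ B₀, h ω = h ω₀ := fun ω hω =>
        (hDBsub hhDB).2 B₀ hB₀ ω hω ω₀ hω₀B₀
      have hcB : B₀.indicator c ∈ Dc B₀ ∪ {0} := by
        rcases hc with hc' | rfl
        · exact (posiGen_condAgg hpart hDc hc').2.2 B₀ hB₀
        · right; simp
      have hcG : c ∈ Gambles Ω := by
        rcases hc with hc' | rfl
        · exact (posiGen_condAgg hpart hDc hc').1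
        · exact zero_mem_gambles
      set q : Ω → ℝ := B₀.indicator c + B₀.indicator (fun _ => h ω₀) with hq
      have hindL : B₀.indicator (fun _ => h ω₀) ∈ Lpos Ω := by
        refine ⟨indicator_mem_gambles B₀ ⟨|h ω₀|, fun ω => le_rfl⟩, ?_, ?_⟩
        · intro ω
          exact Set.indicator_nonneg (fun a _ => hω₀.le) ω
        · intro h0
          have h0' := congrFun h0 ω₀
          rw [Set.indicator_of_mem hω₀B₀] at h0'
          exact absurd h0' hω₀.ne'
      have hqgen : PosiGen (Dc B₀ ∪ Lpos Ω) q := by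
        rcases hcB with hmem | h0
        · exact .add _ _ (.self (Or.inl hmem)) (.self (Or.inr hindL))
        · rw [Set.mem_singleton_iff] at h0
          rw [hq, h0, zero_add]
          exact .self (Or.inr hindL)
      have hqle : q ≤ 0 := by
        intro ω
        by_cases hω : ω ∈ B₀
        · have hqω : q ω = c ω + h ω₀ := by
            simp [hq, Set.indicator_of_mem hω]
          rw [hqω, ← hconst ω hω]
          have h1 := hgval ω
          have h2 := hgle' ω
          have h3 := hpnn ω
          show c ω + h ω ≤ (0 : Ω → ℝ) ω
          simp only [Pi.zero_apply]
          linarith only [h1, h2, h3]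
        · have hqω : q ω = 0 := by
            simp [hq, Set.indicator_of_notMem hω]
          rw [hqω]
          exact le_rfl
      have hqG : q ∈ Gambles Ω :=
        add_mem_gambles (indicator_mem_gambles _ hcG)
          (indicator_mem_gambles _ ⟨|h ω₀|, fun _ => le_rfl⟩)
      exact apl_not_le (hDc B₀ hB₀).2.1 hqgen hqG hqle
    · rcases hc with hcg | rfl
      · -- only the conditional part (and nonneg part) are present
        have hcA := posiGen_condAgg hpart hDc hcg
        obtain ⟨ω₀, hω₀⟩ := Function.ne_iff.mp hcA.2.1
        simp only [Pi.zero_apply] at hω₀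
        obtain ⟨B₀, ⟨hB₀, hω₀B₀⟩, -⟩ := hpart.2 ω₀
        have hcB : B₀.indicator c ∈ Dc B₀ := by
          rcases hcA.2.2 B₀ hB₀ with hmem | h0
          · exact hmem
          · rw [Set.mem_singleton_iff] at h0
            have : c ω₀ = 0 := by
              rw [← Set.indicator_of_mem hω₀B₀ c, h0]; rfl
            exact absurd this hω₀
        have hle : B₀.indicator c ≤ 0 := by
          intro ω
          by_cases hω : ω ∈ B₀
          · rw [Set.indicator_of_mem hω]
            have h1 := hgval ω
            have h2 := hgle' ω
            have h3 := hpnn ω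
            simp only [Pi.zero_apply, Pi.add_apply] at h1 ⊢
            linarith only [h1, h2, h3]
          · simp [Set.indicator_of_notMem hω]
        exact apl_not_le (hDc B₀ hB₀).2.1 (PosiGen.self (Or.inl hcB))
          (indicator_mem_gambles _ hcA.1) hle
      · -- only the nonnegative part is present
        rcases hone with h1 | h1 | h1
        · exact apl_not_le hDBcoh.1 (h1.mono Set.subset_union_left) zero_mem_gambles le_rfl
        · exact (posiGen_condAgg hpart hDc h1).2.1 rfl
        · have hpL := posiGen_lpos h1
          obtain ⟨ω, hω⟩ := Function.ne_iff.mp hpL.2.2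
          have h1' := hgval ω
          have h2' := hgle' ω
          simp only [Pi.zero_apply, Pi.add_apply] at h1' hω
          have hpos : 0 < p ω := lt_of_le_of_ne (hpL.2.1 ω) (Ne.symm hω)
          linarith only [h1', h2', hpos]
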